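/- Let r ≥ 1 be an integer and let u, v, w be distinct points in ℤ² with |v−w| ≤ 2r and u not lying on either of the two circles of radius r passing through v and w. Then the Euclidean distance from u to the union of these two circles is at least 1/(480 r⁵). -/

import Mathlib

lemma ht_gen (p1 p2 M1 M2 q1 q2 N : ℝ)
    (hd2ne : q1^2+q2^2 ≠ 0)
    (hM2 : M1^2+M2^2 = N)
    (hMq : M1*q1 + M2*q2 = 0) :
    (p1*M1+p2*M2)^2 * (q1^2+q2^2) = (p1*q2-p2*q1)^2 * N := by
  have hE : (p1*M1+p2*M2)*(q1^2+q2^2) = (p1*q2-p2*q1)*(M1*q2-M2*q1) := by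
    linear_combination (p1*q1+p2*q2)*hMq
  have hE2 : (M1*q2-M2*q1)^2 = N*(q1^2+q2^2) := by
    linear_combination (q1^2+q2^2)*hM2 - (M1*q1+M2*q2)*hMq
  apply mul_right_cancel₀ hd2ne
  linear_combination ((p1*M1+p2*M2)*(q1^2+q2^2) + (p1*q2-p2*q1)*(M1*q2-M2*q1)) * hE
    + (p1*q2-p2*q1)^2 * hE2

lemma key_gen (F F' A C T d2 N : ℝ) (e1 : F = A + T) (e2 : F' = A - T)
    (ht : T^2*d2 = C^2*N) : A^2*d2 - C^2*N = d2*(F*F') := by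
  rw [e1, e2]; linear_combination ht

set_option maxHeartbeats 1000000 in
lemma sep_aux (r u1 u2 v1 v2 w1 w2 : ℤ) (hr : 1 ≤ r)
    (x y D D' : ℝ)
    (hv : (x - v1)^2 + (y - v2)^2 = (r:ℝ)^2)
    (hw : (x - w1)^2 + (y - w2)^2 = (r:ℝ)^2)
    (hne : ¬(v1 = w1 ∧ v2 = w2))
    (hD0 : 0 ≤ D) (hD'0 : 0 ≤ D')
    (hD : D^2 = ((u1:ℝ) - x)^2 + ((u2:ℝ) - y)^2)
    (hD' : D'^2 = ((u1:ℝ) - ((v1:ℝ) + w1 - x))^2 + ((u2:ℝ) - ((v2:ℝ) + w2 - y))^2)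
    (hD'le : D' ≤ D + 2*r)
    (hfu : D ≠ (r:ℝ)) (hfu' : D' ≠ (r:ℝ))
    (hcon : |D - r| < 1/(480 * (r:ℝ)^5)) : False := by
  have hr1 : (1:ℝ) ≤ (r:ℝ) := by exact_mod_cast hr
  have hrpos : (0:ℝ) < r := by linarith
  have hd2Z : 1 ≤ (w1 - v1)^2 + (w2 - v2)^2 := by
    rcases eq_or_ne v1 w1 with h1 | h1
    · have h2 : v2 ≠ w2 := fun h => hne ⟨h1, h⟩
      have h3 : 1 ≤ |w2 - v2| := Int.one_le_abs (by omega)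
      nlinarith [sq_nonneg (w1 - v1), sq_abs (w2 - v2), abs_nonneg (w2 - v2)]
    · have h3 : 1 ≤ |w1 - v1| := Int.one_le_abs (by omega)
      nlinarith [sq_nonneg (w2 - v2), sq_abs (w1 - v1), abs_nonneg (w1 - v1)]
  have hd2R : (1:ℝ) ≤ ((w1:ℝ)-v1)^2 + ((w2:ℝ)-v2)^2 := by exact_mod_cast hd2Z
  have e1 : D^2 - (r:ℝ)^2 = ((u1:ℝ)^2 + (u2:ℝ)^2 - u1*((v1:ℝ)+w1) - u2*((v2:ℝ)+w2) + (v1:ℝ)*w1 + (v2:ℝ)*w2)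
      + (((u1:ℝ)-v1)*((v1:ℝ)+w1-2*x) + ((u2:ℝ)-v2)*((v2:ℝ)+w2-2*y)) := by
    linear_combination hD + hv
  have e2 : D'^2 - (r:ℝ)^2 = ((u1:ℝ)^2 + (u2:ℝ)^2 - u1*((v1:ℝ)+w1) - u2*((v2:ℝ)+w2) + (v1:ℝ)*w1 + (v2:ℝ)*w2)
      - (((u1:ℝ)-v1)*((v1:ℝ)+w1-2*x) + ((u2:ℝ)-v2)*((v2:ℝ)+w2-2*y)) := by
    linear_combination hD' + hw
  have hM2 : ((v1:ℝ)+w1-2*x)^2 + ((v2:ℝ)+w2-2*y)^2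
      = 4*(r:ℝ)^2 - (((w1:ℝ)-v1)^2+((w2:ℝ)-v2)^2) := by linear_combination 2*hv + 2*hw
  have hMq : ((v1:ℝ)+w1-2*x)*((w1:ℝ)-v1) + ((v2:ℝ)+w2-2*y)*((w2:ℝ)-v2) = 0 := by
    linear_combination hw - hv
  have hd2ne : (((w1:ℝ)-v1)^2+((w2:ℝ)-v2)^2) ≠ 0 := by intro h; rw [h] at hd2R; linarith
  have ht := ht_gen ((u1:ℝ)-v1) ((u2:ℝ)-v2) ((v1:ℝ)+w1-2*x) ((v2:ℝ)+w2-2*y)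
      ((w1:ℝ)-v1) ((w2:ℝ)-v2) (4*(r:ℝ)^2 - (((w1:ℝ)-v1)^2+((w2:ℝ)-v2)^2)) hd2ne hM2 hMq
  have key := key_gen (D^2 - (r:ℝ)^2) (D'^2 - (r:ℝ)^2)
      ((u1:ℝ)^2 + (u2:ℝ)^2 - u1*((v1:ℝ)+w1) - u2*((v2:ℝ)+w2) + (v1:ℝ)*w1 + (v2:ℝ)*w2)
      (((u1:ℝ)-v1)*((w2:ℝ)-v2) - ((u2:ℝ)-v2)*((w1:ℝ)-v1))
      (((u1:ℝ)-v1)*((v1:ℝ)+w1-2*x) + ((u2:ℝ)-v2)*((v2:ℝ)+w2-2*y))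
      (((w1:ℝ)-v1)^2+((w2:ℝ)-v2)^2)
      (4*(r:ℝ)^2 - (((w1:ℝ)-v1)^2+((w2:ℝ)-v2)^2)) e1 e2 ht
  have hKR : (((u1^2+u2^2-u1*(v1+w1)-u2*(v2+w2)+v1*w1+v2*w2)^2 * ((w1-v1)^2+(w2-v2)^2)
      - ((u1-v1)*(w2-v2)-(u2-v2)*(w1-v1))^2 * (4*r^2 - ((w1-v1)^2+(w2-v2)^2)) : ℤ) : ℝ)
      = (((w1:ℝ)-v1)^2+((w2:ℝ)-v2)^2) * ((D^2 - (r:ℝ)^2) * (D'^2 - (r:ℝ)^2)) := by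
    push_cast
    linear_combination key
  have hf : D^2 - (r:ℝ)^2 ≠ 0 := by
    intro h
    rcases mul_eq_zero.mp (show (D - r) * (D + r) = 0 by linear_combination h) with h3 | h3
    · exact hfu (by linarith)
    · linarith
  have hf' : D'^2 - (r:ℝ)^2 ≠ 0 := by
    intro h
    rcases mul_eq_zero.mp (show (D' - r) * (D' + r) = 0 by linear_combination h) with h3 | h3
    · exact hfu' (by linarith)
    · linarith
  have hK0' : (((u1^2+u2^2-u1*(v1+w1)-u2*(v2+w2)+v1*w1+v2*w2)^2 * ((w1-v1)^2+(w2-v2)^2)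
      - ((u1-v1)*(w2-v2)-(u2-v2)*(w1-v1))^2 * (4*r^2 - ((w1-v1)^2+(w2-v2)^2)) : ℤ) : ℝ) ≠ 0 := by
    rw [hKR]; exact mul_ne_zero hd2ne (mul_ne_zero hf hf')
  have hK0 : ((u1^2+u2^2-u1*(v1+w1)-u2*(v2+w2)+v1*w1+v2*w2)^2 * ((w1-v1)^2+(w2-v2)^2)
      - ((u1-v1)*(w2-v2)-(u2-v2)*(w1-v1))^2 * (4*r^2 - ((w1-v1)^2+(w2-v2)^2)) : ℤ) ≠ 0 := by
    exact_mod_cast hK0'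
  have hK1 : (1:ℝ) ≤ |(((u1^2+u2^2-u1*(v1+w1)-u2*(v2+w2)+v1*w1+v2*w2)^2 * ((w1-v1)^2+(w2-v2)^2)
      - ((u1-v1)*(w2-v2)-(u2-v2)*(w1-v1))^2 * (4*r^2 - ((w1-v1)^2+(w2-v2)^2)) : ℤ) : ℝ)| := by
    have h := Int.one_le_abs hK0
    calc (1:ℝ) ≤ ((|_| : ℤ) : ℝ) := by exact_mod_cast h
    _ = _ := by push_cast; ring
  have hKabs : |(((u1^2+u2^2-u1*(v1+w1)-u2*(v2+w2)+v1*w1+v2*w2)^2 * ((w1-v1)^2+(w2-v2)^2)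
      - ((u1-v1)*(w2-v2)-(u2-v2)*(w1-v1))^2 * (4*r^2 - ((w1-v1)^2+(w2-v2)^2)) : ℤ) : ℝ)|
      = (((w1:ℝ)-v1)^2+((w2:ℝ)-v2)^2) * (|D^2 - (r:ℝ)^2| * |D'^2 - (r:ℝ)^2|) := by
    rw [hKR, abs_mul, abs_mul, abs_of_nonneg (by positivity : (0:ℝ) ≤ ((w1:ℝ)-v1)^2+((w2:ℝ)-v2)^2)]
  have habs := abs_lt.mp hcon
  rw [hKabs] at hK1
  clear hKR hK0' hK0 ht key e1 e2 hKabs hv hw hD hD' hcon hfu hfu' hne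
  have hr5 : (0:ℝ) < 480 * (r:ℝ)^5 := by positivity
  have h5 : (1:ℝ) ≤ (r:ℝ)^5 := by
    calc (1:ℝ) = 1^5 := by norm_num
    _ ≤ (r:ℝ)^5 := pow_le_pow_left₀ zero_le_one hr1 5
  have hεle : 1/(480 * (r:ℝ)^5) ≤ (r:ℝ) := by
    rw [div_le_iff₀ hr5]
    nlinarith [h5, hr1]
  have hDlt : D < (r:ℝ) + 1/(480 * (r:ℝ)^5) := by linarith [habs.2]
  have hεpos : (0:ℝ) < 1/(480 * (r:ℝ)^5) := by positivity
  have hfabs : |D^2 - (r:ℝ)^2| ≤ (1/(480 * (r:ℝ)^5)) * (3*r) := by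
    rw [abs_le]
    constructor <;> nlinarith [hD0, hεpos, hεle, hrpos, habs.1, habs.2]
  have hD4 : D' ≤ 4*(r:ℝ) := by linarith
  have hf'abs : |D'^2 - (r:ℝ)^2| ≤ 16*(r:ℝ)^2 := by
    rw [abs_le]
    constructor
    · nlinarith [sq_nonneg D']
    · nlinarith [hD'0, hD4]
  have hd2le : (((w1:ℝ)-v1)^2+((w2:ℝ)-v2)^2) ≤ 4*(r:ℝ)^2 := by
    nlinarith [hM2, sq_nonneg ((v1:ℝ)+w1-2*x), sq_nonneg ((v2:ℝ)+w2-2*y)]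
  have h1 : |D^2 - (r:ℝ)^2| * |D'^2 - (r:ℝ)^2| ≤ ((1/(480 * (r:ℝ)^5)) * (3*r)) * (16*(r:ℝ)^2) :=
    mul_le_mul hfabs hf'abs (abs_nonneg _) (by positivity)
  have h2 : (((w1:ℝ)-v1)^2+((w2:ℝ)-v2)^2) * (|D^2 - (r:ℝ)^2| * |D'^2 - (r:ℝ)^2|)
      ≤ 4*(r:ℝ)^2 * (((1/(480 * (r:ℝ)^5)) * (3*r)) * (16*(r:ℝ)^2)) :=
    mul_le_mul hd2le h1 (mul_nonneg (abs_nonneg _) (abs_nonneg _)) (by positivity)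
  have hfin : 4*(r:ℝ)^2 * (((1/(480 * (r:ℝ)^5)) * (3*r)) * (16*(r:ℝ)^2)) = 192/480 := by
    field_simp
    ring
  rw [hfin] at h2
  linarith

/-- Embedding of integer lattice points into the Euclidean plane. -/
noncomputable def toPlane (p : ℤ × ℤ) : EuclideanSpace ℝ (Fin 2) :=
  WithLp.toLp 2 ![(p.1 : ℝ), (p.2 : ℝ)]

lemma dist_sq_plane (p q : EuclideanSpace ℝ (Fin 2)) :
    dist p q ^ 2 = (p 0 - q 0)^2 + (p 1 - q 1)^2 := by
  rw [EuclideanSpace.dist_eq, Real.sq_sqrt (Finset.sum_nonneg fun i _ => sq_nonneg _)]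
  simp [Fin.sum_univ_two, Real.dist_eq, sq_abs]

lemma eq_of_sq_eq_sq (a b : ℝ) (ha : 0 ≤ a) (hb : 0 ≤ b) (h : a^2 = b^2) : a = b := by
  rcases mul_eq_zero.mp (show (a-b)*(a+b) = 0 by linear_combination h) with h'|h'
  · linarith
  · linarith

lemma my_le_of_sq_le_sq (a b : ℝ) (ha : 0 ≤ a) (hb : 0 ≤ b) (h : a^2 ≤ b^2) : a ≤ b := by
  nlinarith

/-- Integer lattice circle separation: if `u, v, w` are distinct integer points,
`|v - w| ≤ 2r`, and `u` lies on neither radius-`r` circle through `v` and `w`,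
then the distance from `u` to the union of these circles is at least `1/(480 r⁵)`. -/
theorem stmt_0 (r : ℤ) (hr : 1 ≤ r) (u v w : ℤ × ℤ)
    (huv : u ≠ v) (huw : u ≠ w) (hvw : v ≠ w)
    (hdist : dist (toPlane v) (toPlane w) ≤ 2 * r)
    (hoff : ∀ O : EuclideanSpace ℝ (Fin 2),
      dist O (toPlane v) = r → dist O (toPlane w) = r → dist (toPlane u) O ≠ r) :
    ∀ O : EuclideanSpace ℝ (Fin 2),
      dist O (toPlane v) = r → dist O (toPlane w) = r →
        |dist (toPlane u) O - r| ≥ 1 / (480 * (r : ℝ) ^ 5) := by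
  intro O h1 h2
  by_contra hcon
  push_neg at hcon
  have hr1 : (1:ℝ) ≤ (r:ℝ) := by exact_mod_cast hr
  have hrpos : (0:ℝ) < r := by linarith
  have hv0 : toPlane v 0 = (v.1:ℝ) := rfl
  have hv1 : toPlane v 1 = (v.2:ℝ) := rfl
  have hw0 : toPlane w 0 = (w.1:ℝ) := rfl
  have hw1 : toPlane w 1 = (w.2:ℝ) := rfl
  have hu0 : toPlane u 0 = (u.1:ℝ) := rfl
  have hu1 : toPlane u 1 = (u.2:ℝ) := rfl
  -- circle equations in coordinates
  have hv : (O 0 - (v.1:ℝ))^2 + (O 1 - (v.2:ℝ))^2 = (r:ℝ)^2 := by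
    have := dist_sq_plane O (toPlane v)
    rw [h1, hv0, hv1] at this
    linarith
  have hw : (O 0 - (w.1:ℝ))^2 + (O 1 - (w.2:ℝ))^2 = (r:ℝ)^2 := by
    have := dist_sq_plane O (toPlane w)
    rw [h2, hw0, hw1] at this
    linarith
  -- the reflected center
  set O' : EuclideanSpace ℝ (Fin 2) := WithLp.toLp 2 ![(v.1:ℝ)+w.1 - O 0, (v.2:ℝ)+w.2 - O 1] with hO'
  have hO'0 : O' 0 = (v.1:ℝ)+w.1 - O 0 := rfl
  have hO'1 : O' 1 = (v.2:ℝ)+w.2 - O 1 := rfl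
  have h1' : dist O' (toPlane v) = r := by
    apply eq_of_sq_eq_sq _ _ dist_nonneg (by linarith)
    rw [dist_sq_plane, hO'0, hO'1, hv0, hv1]
    linear_combination hw
  have h2' : dist O' (toPlane w) = r := by
    apply eq_of_sq_eq_sq _ _ dist_nonneg (by linarith)
    rw [dist_sq_plane, hO'0, hO'1, hw0, hw1]
    linear_combination hv
  have hfu' : dist (toPlane u) O' ≠ r := hoff O' h1' h2'
  -- distance between the two centers is at most 2r
  have hOO' : dist O O' ≤ 2*(r:ℝ) := by
    apply my_le_of_sq_le_sq _ _ dist_nonneg (by linarith)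
    rw [dist_sq_plane, hO'0, hO'1]
    nlinarith [hv, hw, sq_nonneg ((v.1:ℝ) - w.1), sq_nonneg ((v.2:ℝ) - w.2),
      sq_nonneg ((v.1:ℝ) + w.1 - 2 * O 0), sq_nonneg ((v.2:ℝ) + w.2 - 2 * O 1)]
  have hD'le : dist (toPlane u) O' ≤ dist (toPlane u) O + 2*(r:ℝ) := by
    calc dist (toPlane u) O' ≤ dist (toPlane u) O + dist O O' := dist_triangle _ _ _
    _ ≤ dist (toPlane u) O + 2*(r:ℝ) := by linarith
  have hne : ¬(v.1 = w.1 ∧ v.2 = w.2) := by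
    intro h
    exact hvw (Prod.ext h.1 h.2)
  exact sep_aux r u.1 u.2 v.1 v.2 w.1 w.2 hr (O 0) (O 1)
    (dist (toPlane u) O) (dist (toPlane u) O') hv hw hne dist_nonneg dist_nonneg
    (by rw [dist_sq_plane, hu0, hu1])
    (by rw [dist_sq_plane, hu0, hu1, hO'0, hO'1])
    hD'le (hoff O h1 h2) hfu' hcon
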